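/- For a multislope ski rental instance with k+1 slopes (buying costs b_0 < b_1 < ... < b_k, rental rates r_0 > r_1 > ... > r_k = 0, b_0 = 0), the optimal offline cost OPT(t) = min_i (b_i + r_i·t) decomposes as the sum of the optimal costs of k two-slope instances: OPT(t) = Σ_{i=1}^k min{b_i − b_{i−1}, (r_{i−1} − r_i)·t}. -/

import Mathlib

open Finset

private lemma tele_aux (f : ℕ → ℝ) (a c : ℕ) (h : a ≤ c) :
    ∑ l ∈ Finset.Ioc a c, (f l - f (l - 1)) = f c - f a := by
  induction c with
  | zero =>
    interval_cases a
    simp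
  | succ n ih =>
    rcases Nat.lt_or_ge a (n + 1) with h1 | h1
    · have ha : a ≤ n := Nat.le_of_lt_succ h1
      rw [Finset.sum_Ioc_succ_top ha, ih ha]
      simp
    · have : a = n + 1 := le_antisymm h h1
      subst this; simp

/-- Decomposition of the optimal offline multislope cost into `k` two-slope optima. -/
theorem multislope_opt_decomposition (k : ℕ) (hk : 1 ≤ k) (b r : ℕ → ℝ)
    (hb0 : b 0 = 0) (hrk : r k = 0)
    (hb : ∀ i < k, b i < b (i + 1)) (hr : ∀ i < k, r (i + 1) < r i)
    (hs : ∀ i, 1 ≤ i → i < k →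
      (b i - b (i - 1)) / (r (i - 1) - r i) < (b (i + 1) - b i) / (r i - r (i + 1)))
    (hs1 : 0 < (b 1 - b 0) / (r 0 - r 1))
    (t : ℝ) (ht : 0 ≤ t) :
    (Finset.range (k + 1)).inf' (by simp) (fun i => b i + r i * t)
      = ∑ i ∈ Finset.Icc 1 k, min (b i - b (i - 1)) ((r (i - 1) - r i) * t) := by
  have hpos : ∀ l, 1 ≤ l → l ≤ k → 0 < r (l - 1) - r l := by
    intro l h1 h2
    have h3 := hr (l - 1) (by omega)
    have h4 : l - 1 + 1 = l := by omega
    rw [h4] at h3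
    linarith
  -- Q l : t < s_l
  have Qstep : ∀ l, 1 ≤ l → l < k →
      (r (l - 1) - r l) * t < b l - b (l - 1) →
      (r (l + 1 - 1) - r (l + 1)) * t < b (l + 1) - b (l + 1 - 1) := by
    intro l h1 h2 hQ
    have d1 : 0 < r (l - 1) - r l := hpos l h1 (le_of_lt h2)
    have d2 : 0 < r l - r (l + 1) := by have := hr l h2; linarith
    have ht1 : t < (b l - b (l - 1)) / (r (l - 1) - r l) :=
      (lt_div_iff₀ d1).2 (by linarith [mul_comm (r (l - 1) - r l) t])
    have ht2 : t < (b (l + 1) - b l) / (r l - r (l + 1)) := lt_trans ht1 (hs l h1 h2)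
    have := (lt_div_iff₀ d2).1 ht2
    simpa [Nat.add_sub_cancel, mul_comm] using this
  have key : ∃ j ≤ k,
      (∀ l, 0 < l → l ≤ j → b l - b (l - 1) ≤ (r (l - 1) - r l) * t) ∧
      (∀ l, j < l → l ≤ k → (r (l - 1) - r l) * t < b l - b (l - 1)) := by
    set S := (Finset.Ioc 0 k).filter
      (fun l => (r (l - 1) - r l) * t < b l - b (l - 1)) with hSdef
    by_cases hS : S.Nonempty
    · set m := S.min' hS with hmdef
      have hm : m ∈ S := S.min'_mem hS
      rw [hSdef, Finset.mem_filter, Finset.mem_Ioc] at hm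
      obtain ⟨⟨hm1, hm2⟩, hmQ⟩ := hm
      refine ⟨m - 1, by omega, ?_, ?_⟩
      · intro l hl1 hl2
        by_contra hQl
        push_neg at hQl
        have hlS : l ∈ S := by
          rw [hSdef, Finset.mem_filter, Finset.mem_Ioc]
          exact ⟨⟨hl1, by omega⟩, hQl⟩
        have := S.min'_le l hlS
        omega
      · have aux : ∀ d, m + d ≤ k → (r (m + d - 1) - r (m + d)) * t < b (m + d) - b (m + d - 1) := by
          intro d
          induction d with
          | zero => intro _; simpa using hmQ
          | succ n ih =>
            intro h
            have h' := ih (by omega)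
            have := Qstep (m + n) (by omega) (by omega) h'
            rw [show m + (n + 1) = m + n + 1 by omega]; exact this
        intro l hl1 hl2
        have hlm : l = m + (l - m) := by omega
        rw [hlm]
        exact aux (l - m) (by omega)
    · refine ⟨k, le_refl k, ?_, fun l h1 h2 => by omega⟩
      intro l hl1 hl2
      by_contra hQl
      push_neg at hQl
      exact hS ⟨l, by rw [hSdef, Finset.mem_filter, Finset.mem_Ioc]; exact ⟨⟨hl1, hl2⟩, hQl⟩⟩
  obtain ⟨j, hj, hlow, hhigh⟩ := key
  have hdecomp : ∀ i, i ≤ k → b i + r i * t =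
      (∑ l ∈ Finset.Ioc 0 i, (b l - b (l - 1))) +
      ∑ l ∈ Finset.Ioc i k, (r (l - 1) - r l) * t := by
    intro i hik
    have h1 : ∑ l ∈ Finset.Ioc 0 i, (b l - b (l - 1)) = b i - b 0 :=
      tele_aux b 0 i (Nat.zero_le i)
    have h2 : ∑ l ∈ Finset.Ioc i k, (r (l - 1) - r l) = r i - r k := by
      have := tele_aux (fun n => -r n) i k hik
      have e : ∀ l, (-r l) - (-r (l - 1)) = r (l - 1) - r l := by intro l; ring
      calc ∑ l ∈ Finset.Ioc i k, (r (l - 1) - r l)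
          = ∑ l ∈ Finset.Ioc i k, ((-r l) - (-r (l - 1))) := by
            apply Finset.sum_congr rfl; intro l _; ring
        _ = (-r k) - (-r i) := this
        _ = r i - r k := by ring
    rw [h1, ← Finset.sum_mul, h2, hb0, hrk]
    ring
  have hsplit : ∀ i, i ≤ k →
      ∑ l ∈ Finset.Ioc 0 k, min (b l - b (l - 1)) ((r (l - 1) - r l) * t) =
      (∑ l ∈ Finset.Ioc 0 i, min (b l - b (l - 1)) ((r (l - 1) - r l) * t)) +
      ∑ l ∈ Finset.Ioc i k, min (b l - b (l - 1)) ((r (l - 1) - r l) * t) := by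
    intro i hik
    rw [Finset.sum_Ioc_consecutive _ (Nat.zero_le i) hik]
  have hIcc : Finset.Icc 1 k = Finset.Ioc 0 k := Finset.Icc_add_one_left_eq_Ioc 0 k
  rw [hIcc]
  have hgen : ∀ i, i ≤ k →
      ∑ l ∈ Finset.Ioc 0 k, min (b l - b (l - 1)) ((r (l - 1) - r l) * t) ≤ b i + r i * t := by
    intro i hik
    rw [hdecomp i hik, hsplit i hik]
    gcongr with l hl l hl
    · exact min_le_left _ _
    · exact min_le_right _ _
  have heqj : ∑ l ∈ Finset.Ioc 0 k, min (b l - b (l - 1)) ((r (l - 1) - r l) * t)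
      = b j + r j * t := by
    rw [hsplit j hj, hdecomp j hj]
    congr 1
    · apply Finset.sum_congr rfl
      intro l hl
      rw [Finset.mem_Ioc] at hl
      exact min_eq_left (hlow l hl.1 hl.2)
    · apply Finset.sum_congr rfl
      intro l hl
      rw [Finset.mem_Ioc] at hl
      exact min_eq_right (le_of_lt (hhigh l hl.1 hl.2))
  apply le_antisymm
  · refine le_trans (Finset.inf'_le _ (Finset.mem_range.2 (by omega : j < k + 1))) ?_
    exact le_of_eq heqj.symm
  · apply Finset.le_inf'
    intro i hi
    rw [Finset.mem_range] at hi
    exact hgen i (by omega)
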